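/- The asymptotic mass conservation holds for the degenerate two-soliton: with amplitudes A₁₁,± = 2b₁|coefficient| before/after collision given by A₁₁,₋ = (2b₁/√η₂)|γ₂₁*/γ₁₁* + 2ib₂γ₂₂*(γ₂₁*γ₂₂+γ₃₁*γ₃₂)/(γ₁₁*(|γ₂₂|²+|γ₃₂|²)(a₁−a₂−i(b₁+b₂)))| and A₂₁,₋ its analogue with γ₂→γ₃, and A₁₁,₊ = 2b₁|γ₂₁|/(|γ₁₁|√g₁), A₂₁,₊ = 2b₁|γ₃₁|/(|γ₁₁|√g₁), we have A₁₁,₋² + A₂₁,₋² = A₁₁,₊² + A₂₁,₊² = 4b₁². -/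

import Mathlib

open Complex Real
set_option maxHeartbeats 1000000

private lemma aux_lagrange (γ₂₁ γ₃₁ γ₂₂ γ₃₂ : ℂ) :
    (Complex.normSq γ₂₁ + Complex.normSq γ₃₁) * (Complex.normSq γ₂₂ + Complex.normSq γ₃₂)
      - Complex.normSq (starRingEnd ℂ γ₂₁ * γ₂₂ + starRingEnd ℂ γ₃₁ * γ₃₂)
    = Complex.normSq (γ₂₁ * γ₃₂ - γ₃₁ * γ₂₂) := by
  simp only [Complex.normSq_apply, Complex.add_re, Complex.add_im, Complex.sub_re,
    Complex.sub_im, Complex.mul_re, Complex.mul_im, Complex.conj_re, Complex.conj_im]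
  ring

private lemma aux_key (a₁ b₁ a₂ b₂ s : ℝ) (γ₂₁ γ₃₁ γ₂₂ γ₃₂ : ℂ) :
    Complex.normSq (starRingEnd ℂ γ₂₁ * (s:ℂ) * (((a₁ - a₂ : ℝ):ℂ) - Complex.I * ((b₁ + b₂ : ℝ):ℂ))
        + 2 * Complex.I * (b₂:ℂ) * starRingEnd ℂ γ₂₂ * (starRingEnd ℂ γ₂₁ * γ₂₂ + starRingEnd ℂ γ₃₁ * γ₃₂))
    + Complex.normSq (starRingEnd ℂ γ₃₁ * (s:ℂ) * (((a₁ - a₂ : ℝ):ℂ) - Complex.I * ((b₁ + b₂ : ℝ):ℂ))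
        + 2 * Complex.I * (b₂:ℂ) * starRingEnd ℂ γ₃₂ * (starRingEnd ℂ γ₂₁ * γ₂₂ + starRingEnd ℂ γ₃₁ * γ₃₂))
    = s^2 * (Complex.normSq γ₂₁ + Complex.normSq γ₃₁) * ((a₁-a₂)^2 + (b₁+b₂)^2)
      + 4*b₂^2 * (Complex.normSq γ₂₂ + Complex.normSq γ₃₂)
          * Complex.normSq (starRingEnd ℂ γ₂₁ * γ₂₂ + starRingEnd ℂ γ₃₁ * γ₃₂)
      - 4*b₂*(b₁+b₂) * s
          * Complex.normSq (starRingEnd ℂ γ₂₁ * γ₂₂ + starRingEnd ℂ γ₃₁ * γ₃₂) := by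
  simp only [Complex.normSq_apply, Complex.add_re, Complex.add_im, Complex.sub_re,
    Complex.sub_im, Complex.mul_re, Complex.mul_im, Complex.conj_re, Complex.conj_im,
    Complex.I_re, Complex.I_im, Complex.ofReal_re, Complex.ofReal_im, Complex.re_ofNat,
    Complex.im_ofNat]
  ring
theorem stmt_16 (a₁ b₁ a₂ b₂ : ℝ) (hb₁ : 0 < b₁) (hb₂ : 0 < b₂)
    (hdist : (a₁, b₁) ≠ (a₂, b₂))
    (γ₁₁ γ₂₁ γ₃₁ γ₂₂ γ₃₂ : ℂ)
    (h11 : γ₁₁ ≠ 0) (h21 : (γ₂₁, γ₃₁) ≠ 0) (h22 : (γ₂₂, γ₃₂) ≠ 0)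
    (g₁ η₂ : ℝ)
    (hg₁ : g₁ = (‖γ₂₁‖ ^ 2 + ‖γ₃₁‖ ^ 2) / ‖γ₁₁‖ ^ 2)
    (hη₂ : η₂ = g₁ - 4 * b₁ * b₂
      * ‖(γ₂₁ * starRingEnd ℂ γ₂₂ + γ₃₁ * starRingEnd ℂ γ₃₂)‖ ^ 2
      / (‖γ₁₁‖ ^ 2 * (‖γ₂₂‖ ^ 2 + ‖γ₃₂‖ ^ 2)
        * ((a₁ - a₂) ^ 2 + (b₁ + b₂) ^ 2)))
    (A₁₁m A₂₁m A₁₁p A₂₁p : ℝ)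
    (hA₁₁m : A₁₁m = (2 * b₁ / Real.sqrt η₂) * ‖(starRingEnd ℂ γ₂₁ / starRingEnd ℂ γ₁₁
        + 2 * Complex.I * (b₂ : ℂ) * starRingEnd ℂ γ₂₂
            * (starRingEnd ℂ γ₂₁ * γ₂₂ + starRingEnd ℂ γ₃₁ * γ₃₂)
          / (starRingEnd ℂ γ₁₁
              * ((‖γ₂₂‖ ^ 2 + ‖γ₃₂‖ ^ 2 : ℝ) : ℂ)
              * ((a₁ - a₂ : ℝ) - Complex.I * ((b₁ + b₂ : ℝ) : ℂ))))‖)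
    (hA₂₁m : A₂₁m = (2 * b₁ / Real.sqrt η₂) * ‖(starRingEnd ℂ γ₃₁ / starRingEnd ℂ γ₁₁
        + 2 * Complex.I * (b₂ : ℂ) * starRingEnd ℂ γ₃₂
            * (starRingEnd ℂ γ₂₁ * γ₂₂ + starRingEnd ℂ γ₃₁ * γ₃₂)
          / (starRingEnd ℂ γ₁₁
              * ((‖γ₂₂‖ ^ 2 + ‖γ₃₂‖ ^ 2 : ℝ) : ℂ)
              * ((a₁ - a₂ : ℝ) - Complex.I * ((b₁ + b₂ : ℝ) : ℂ))))‖)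
    (hA₁₁p : A₁₁p = 2 * b₁ * ‖γ₂₁‖ / (‖γ₁₁‖ * Real.sqrt g₁))
    (hA₂₁p : A₂₁p = 2 * b₁ * ‖γ₃₁‖ / (‖γ₁₁‖ * Real.sqrt g₁)) :
    A₁₁m ^ 2 + A₂₁m ^ 2 = A₁₁p ^ 2 + A₂₁p ^ 2
    ∧ A₁₁p ^ 2 + A₂₁p ^ 2 = 4 * b₁ ^ 2 := by
  -- basic positivity facts
  have h11' : 0 < Complex.normSq γ₁₁ := Complex.normSq_pos.mpr h11
  rw [Ne, Prod.mk_eq_zero, not_and_or] at h21 h22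
  have hS : 0 < Complex.normSq γ₂₁ + Complex.normSq γ₃₁ := by
    rcases h21 with h | h
    · exact add_pos_of_pos_of_nonneg (Complex.normSq_pos.mpr h) (Complex.normSq_nonneg _)
    · exact add_pos_of_nonneg_of_pos (Complex.normSq_nonneg _) (Complex.normSq_pos.mpr h)
  have hs : 0 < Complex.normSq γ₂₂ + Complex.normSq γ₃₂ := by
    rcases h22 with h | h
    · exact add_pos_of_pos_of_nonneg (Complex.normSq_pos.mpr h) (Complex.normSq_nonneg _)
    · exact add_pos_of_nonneg_of_pos (Complex.normSq_nonneg _) (Complex.normSq_pos.mpr h)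
  have hDd : 0 < (a₁ - a₂) ^ 2 + (b₁ + b₂) ^ 2 := by nlinarith [sq_nonneg (a₁ - a₂)]
  have hdiff : 0 < (a₁ - a₂) ^ 2 + (b₁ - b₂) ^ 2 := by
    rcases eq_or_ne a₁ a₂ with ha | ha
    · rcases eq_or_ne b₁ b₂ with hbb | hbb
      · exact absurd (by rw [ha, hbb]) hdist
      · have h1 : b₁ - b₂ ≠ 0 := sub_ne_zero.mpr hbb
        have := lt_of_le_of_ne (sq_nonneg (b₁ - b₂)) (Ne.symm (pow_ne_zero 2 h1))
        nlinarith [sq_nonneg (a₁ - a₂)]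
    · have h1 : a₁ - a₂ ≠ 0 := sub_ne_zero.mpr ha
      have := lt_of_le_of_ne (sq_nonneg (a₁ - a₂)) (Ne.symm (pow_ne_zero 2 h1))
      nlinarith [sq_nonneg (b₁ - b₂)]
  -- rewrite abs² as normSq everywhere
  simp only [Complex.sq_norm] at hg₁ hη₂ hA₁₁m hA₂₁m
  have hg : 0 < g₁ := by rw [hg₁]; exact div_pos hS h11'
  -- post-collision part
  have hpost : A₁₁p ^ 2 + A₂₁p ^ 2 = 4 * b₁ ^ 2 := by
    have hab : ‖γ₁₁‖ ≠ 0 := norm_ne_zero_iff.mpr h11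
    have hgs : Real.sqrt g₁ ≠ 0 := ne_of_gt (Real.sqrt_pos.mpr hg)
    have hg1γ : g₁ * Complex.normSq γ₁₁ = Complex.normSq γ₂₁ + Complex.normSq γ₃₁ := by
      rw [hg₁]; field_simp
    rw [hA₁₁p, hA₂₁p, div_pow, div_pow, ← add_div, div_eq_iff (by positivity)]
    simp only [mul_pow, Real.sq_sqrt hg.le, Complex.sq_norm]
    linear_combination (-4 * b₁ ^ 2) * hg1γ
  -- η₂ identity
  have hconj : Complex.normSq (γ₂₁ * starRingEnd ℂ γ₂₂ + γ₃₁ * starRingEnd ℂ γ₃₂)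
      = Complex.normSq (starRingEnd ℂ γ₂₁ * γ₂₂ + starRingEnd ℂ γ₃₁ * γ₃₂) := by
    rw [← Complex.normSq_conj (starRingEnd ℂ γ₂₁ * γ₂₂ + starRingEnd ℂ γ₃₁ * γ₃₂)]
    congr 1
    simp [map_add, map_mul]
  have hη2' : η₂ * (Complex.normSq γ₁₁ * (Complex.normSq γ₂₂ + Complex.normSq γ₃₂)
        * ((a₁ - a₂) ^ 2 + (b₁ + b₂) ^ 2))
      = (Complex.normSq γ₂₁ + Complex.normSq γ₃₁) * (Complex.normSq γ₂₂ + Complex.normSq γ₃₂)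
          * ((a₁ - a₂) ^ 2 + (b₁ + b₂) ^ 2)
        - 4 * b₁ * b₂ * Complex.normSq (starRingEnd ℂ γ₂₁ * γ₂₂ + starRingEnd ℂ γ₃₁ * γ₃₂) := by
    rw [hη₂, hg₁, hconj]
    field_simp
  -- positivity of η₂
  have hlag := aux_lagrange γ₂₁ γ₃₁ γ₂₂ γ₃₂
  have hlag' : Complex.normSq (starRingEnd ℂ γ₂₁ * γ₂₂ + starRingEnd ℂ γ₃₁ * γ₃₂)
      ≤ (Complex.normSq γ₂₁ + Complex.normSq γ₃₁) * (Complex.normSq γ₂₂ + Complex.normSq γ₃₂) := by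
    nlinarith [Complex.normSq_nonneg (γ₂₁ * γ₃₂ - γ₃₁ * γ₂₂)]
  have hηpos : 0 < η₂ := by
    have hQ : 0 < η₂ * (Complex.normSq γ₁₁ * (Complex.normSq γ₂₂ + Complex.normSq γ₃₂)
        * ((a₁ - a₂) ^ 2 + (b₁ + b₂) ^ 2)) := by
      rw [hη2']
      nlinarith [mul_pos (mul_pos hS hs) hdiff,
        mul_le_mul_of_nonneg_left hlag' (by positivity : (0:ℝ) ≤ 4 * b₁ * b₂)]
    nlinarith [mul_pos (mul_pos h11' hs) hDd]
  -- pre-collision part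
  have hc11 : starRingEnd ℂ γ₁₁ ≠ 0 := by simpa using h11
  have hsne : ((Complex.normSq γ₂₂ + Complex.normSq γ₃₂ : ℝ) : ℂ) ≠ 0 := by
    exact_mod_cast ne_of_gt hs
  have hdne : (((a₁ - a₂ : ℝ) : ℂ) - Complex.I * ((b₁ + b₂ : ℝ) : ℂ)) ≠ 0 := by
    intro h
    have him := congrArg Complex.im h
    simp [Complex.sub_im, Complex.mul_im, Complex.I_re, Complex.I_im] at him
    nlinarith
  have hnsqd : Complex.normSq (((a₁ - a₂ : ℝ) : ℂ) - Complex.I * ((b₁ + b₂ : ℝ) : ℂ))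
      = (a₁ - a₂) ^ 2 + (b₁ + b₂) ^ 2 := by
    simp [Complex.normSq_apply, Complex.sub_re, Complex.sub_im, Complex.mul_re,
      Complex.mul_im, Complex.I_re, Complex.I_im]
    ring
  have hX : ∀ γa γb : ℂ,
      starRingEnd ℂ γa / starRingEnd ℂ γ₁₁
        + 2 * Complex.I * (b₂ : ℂ) * starRingEnd ℂ γb
            * (starRingEnd ℂ γ₂₁ * γ₂₂ + starRingEnd ℂ γ₃₁ * γ₃₂)
          / (starRingEnd ℂ γ₁₁ * ((Complex.normSq γ₂₂ + Complex.normSq γ₃₂ : ℝ) : ℂ)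
              * (((a₁ - a₂ : ℝ) : ℂ) - Complex.I * ((b₁ + b₂ : ℝ) : ℂ)))
      = (starRingEnd ℂ γa * ((Complex.normSq γ₂₂ + Complex.normSq γ₃₂ : ℝ) : ℂ)
            * (((a₁ - a₂ : ℝ) : ℂ) - Complex.I * ((b₁ + b₂ : ℝ) : ℂ))
          + 2 * Complex.I * (b₂ : ℂ) * starRingEnd ℂ γb
            * (starRingEnd ℂ γ₂₁ * γ₂₂ + starRingEnd ℂ γ₃₁ * γ₃₂))
        / (starRingEnd ℂ γ₁₁ * ((Complex.normSq γ₂₂ + Complex.normSq γ₃₂ : ℝ) : ℂ)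
            * (((a₁ - a₂ : ℝ) : ℂ) - Complex.I * ((b₁ + b₂ : ℝ) : ℂ))) := by
    intro γa γb
    have hD : starRingEnd ℂ γ₁₁ * ((Complex.normSq γ₂₂ + Complex.normSq γ₃₂ : ℝ) : ℂ)
        * (((a₁ - a₂ : ℝ) : ℂ) - Complex.I * ((b₁ + b₂ : ℝ) : ℂ)) ≠ 0 :=
      mul_ne_zero (mul_ne_zero hc11 hsne) hdne
    rw [div_add_div _ _ hc11 hD, div_eq_div_iff (mul_ne_zero hc11 hD) hD]
    ring
  rw [hX γ₂₁ γ₂₂] at hA₁₁m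
  rw [hX γ₃₁ γ₃₂] at hA₂₁m
  have hDen : Complex.normSq (starRingEnd ℂ γ₁₁
        * ((Complex.normSq γ₂₂ + Complex.normSq γ₃₂ : ℝ) : ℂ)
        * (((a₁ - a₂ : ℝ) : ℂ) - Complex.I * ((b₁ + b₂ : ℝ) : ℂ)))
      = Complex.normSq γ₁₁ * (Complex.normSq γ₂₂ + Complex.normSq γ₃₂) ^ 2
          * ((a₁ - a₂) ^ 2 + (b₁ + b₂) ^ 2) := by
    rw [Complex.normSq_mul, Complex.normSq_mul, Complex.normSq_conj,
      Complex.normSq_ofReal, hnsqd]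
    ring
  have hkey := aux_key a₁ b₁ a₂ b₂ (Complex.normSq γ₂₂ + Complex.normSq γ₃₂) γ₂₁ γ₃₁ γ₂₂ γ₃₂
  have hpre : A₁₁m ^ 2 + A₂₁m ^ 2 = 4 * b₁ ^ 2 := by
    have hRpos : 0 < η₂ * (Complex.normSq γ₁₁ * (Complex.normSq γ₂₂ + Complex.normSq γ₃₂) ^ 2
        * ((a₁ - a₂) ^ 2 + (b₁ + b₂) ^ 2)) :=
      mul_pos hηpos (mul_pos (mul_pos h11' (pow_pos hs 2)) hDd)
    rw [hA₁₁m, hA₂₁m, norm_div, norm_div, mul_pow, mul_pow, div_pow (2 * b₁),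
      Real.sq_sqrt hηpos.le]
    simp only [div_pow, Complex.sq_norm]
    rw [hDen]
    have hsum : Complex.normSq (starRingEnd ℂ γ₂₁
            * ((Complex.normSq γ₂₂ + Complex.normSq γ₃₂ : ℝ) : ℂ)
            * (((a₁ - a₂ : ℝ) : ℂ) - Complex.I * ((b₁ + b₂ : ℝ) : ℂ))
          + 2 * Complex.I * (b₂ : ℂ) * starRingEnd ℂ γ₂₂
            * (starRingEnd ℂ γ₂₁ * γ₂₂ + starRingEnd ℂ γ₃₁ * γ₃₂))
        + Complex.normSq (starRingEnd ℂ γ₃₁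
            * ((Complex.normSq γ₂₂ + Complex.normSq γ₃₂ : ℝ) : ℂ)
            * (((a₁ - a₂ : ℝ) : ℂ) - Complex.I * ((b₁ + b₂ : ℝ) : ℂ))
          + 2 * Complex.I * (b₂ : ℂ) * starRingEnd ℂ γ₃₂
            * (starRingEnd ℂ γ₂₁ * γ₂₂ + starRingEnd ℂ γ₃₁ * γ₃₂))
        = η₂ * (Complex.normSq γ₁₁ * (Complex.normSq γ₂₂ + Complex.normSq γ₃₂) ^ 2
            * ((a₁ - a₂) ^ 2 + (b₁ + b₂) ^ 2)) := by
      rw [hkey]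
      linear_combination (-(Complex.normSq γ₂₂ + Complex.normSq γ₃₂)) * hη2'
    rw [div_mul_div_comm, div_mul_div_comm, ← add_div, div_eq_iff hRpos.ne']
    linear_combination (4 * b₁ ^ 2) * hsum
  exact ⟨by rw [hpre, hpost], hpost⟩
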